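/- arXiv:2404.14562 — 2 statements merged into one kernel-verified Lean document; each statement's English description precedes it below -/
import Mathlib

section
/- For every complex number s with Re s > 2, the function ξ ↦ ξ₁² · (1 + |ξ|²)^{−s/2 − 2} is integrable on ℝ² and (1/(4π²)) ∫_{ℝ²} ξ₁² (1 + |ξ|²)^{−s/2 − 2} dξ = 1/(2π · s · (s + 2)). -/
open MeasureTheory Real Set Filter
open scoped Topology

private lemma aux_re (s : ℂ) : (-s / 2 - 2).re = -s.re / 2 - 2 := by
  simp [Complex.div_re]

private lemma aux_cont (s : ℂ) : Continuous (fun ξ : ℝ × ℝ =>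
    ((ξ.1 ^ 2 : ℝ) : ℂ) * ((1 + ξ.1 ^ 2 + ξ.2 ^ 2 : ℝ) : ℂ) ^ (-s / 2 - 2)) := by
  apply Continuous.mul
  · exact Complex.continuous_ofReal.comp (by fun_prop)
  · apply Continuous.cpow
    · exact Complex.continuous_ofReal.comp (by fun_prop)
    · exact continuous_const
    · intro ξ
      exact Complex.ofReal_mem_slitPlane.2 (by positivity)

private lemma aux_integrable (s : ℂ) (hs : 2 < s.re) :
    Integrable (fun ξ : ℝ × ℝ =>
      ((ξ.1 ^ 2 : ℝ) : ℂ) * ((1 + ξ.1 ^ 2 + ξ.2 ^ 2 : ℝ) : ℂ) ^ (-s / 2 - 2)) := by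
  have hfin : (Module.finrank ℝ (ℝ × ℝ) : ℝ) < s.re + 2 := by
    simp only [Module.finrank_self, Module.finrank_prod]
    push_cast; linarith
  refine (integrable_rpow_neg_one_add_norm_sq hfin).mono' (aux_cont s).aestronglyMeasurable
    (Eventually.of_forall fun ξ => ?_)
  have h0 : (0:ℝ) < 1 + ξ.1 ^ 2 + ξ.2 ^ 2 := by positivity
  have hnorm : ‖((ξ.1 ^ 2 : ℝ) : ℂ) * ((1 + ξ.1 ^ 2 + ξ.2 ^ 2 : ℝ) : ℂ) ^ (-s / 2 - 2)‖
      = ξ.1 ^ 2 * (1 + ξ.1 ^ 2 + ξ.2 ^ 2) ^ (-s.re / 2 - 2) := by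
    rw [norm_mul,
      Complex.norm_cpow_eq_rpow_re_of_pos h0, Complex.norm_real, Real.norm_eq_abs,
      abs_of_nonneg (sq_nonneg _), aux_re]
  rw [hnorm]
  have h1 : ξ.1 ^ 2 * (1 + ξ.1 ^ 2 + ξ.2 ^ 2) ^ (-s.re / 2 - 2)
      ≤ (1 + ξ.1 ^ 2 + ξ.2 ^ 2) ^ (-(s.re + 2) / 2) := by
    rw [show (-(s.re + 2) / 2 : ℝ) = 1 + (-s.re / 2 - 2) + 1 - 1 by ring]
    rw [show (1 + (-s.re / 2 - 2) + 1 - 1 : ℝ) = 1 + (-s.re / 2 - 2) by ring]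
    rw [Real.rpow_one_add' h0.le (by intro h; nlinarith [h])]
    apply mul_le_mul_of_nonneg_right (by nlinarith [sq_nonneg ξ.2]) (rpow_nonneg h0.le _)
  have h2 : (1 + ξ.1 ^ 2 + ξ.2 ^ 2 : ℝ) ^ (-(s.re + 2) / 2) ≤ (1 + ‖ξ‖ ^ 2) ^ (-(s.re + 2) / 2) := by
    apply rpow_le_rpow_of_nonpos (by positivity)
    · have hnn : ‖ξ‖ ^ 2 ≤ ξ.1 ^ 2 + ξ.2 ^ 2 := by
        have h1' : ‖ξ‖ = max |ξ.1| |ξ.2| := rfl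
        rw [h1']
        rcases max_cases |ξ.1| |ξ.2| with ⟨h, _⟩ | ⟨h, _⟩ <;> rw [h, sq_abs] <;>
          nlinarith [sq_nonneg ξ.1, sq_nonneg ξ.2]
      linarith
    · linarith
  exact h1.trans h2

private lemma aux_hasDeriv (c : ℂ) (x : ℝ) :
    HasDerivAt (fun r : ℝ => ((1 + r ^ 2 : ℝ) : ℂ) ^ c)
      (c * ((1 + x ^ 2 : ℝ) : ℂ) ^ (c - 1) * (2 * (x:ℂ))) x := by
  have h0 : (0:ℝ) < 1 + x ^ 2 := by positivity
  have hslit : ((1:ℂ) + (x:ℂ) ^ 2) ∈ Complex.slitPlane := by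
    rw [show ((1:ℂ) + (x:ℂ) ^ 2) = ((1 + x ^ 2 : ℝ) : ℂ) by push_cast; ring]
    exact Complex.ofReal_mem_slitPlane.2 h0
  have hz : HasDerivAt (fun z : ℂ => 1 + z ^ 2) (2 * (x:ℂ)) (x:ℂ) := by
    simpa using (hasDerivAt_pow 2 (x:ℂ)).const_add 1
  have he := HasDerivAt.cpow_const (c := c) hz hslit
  have h := he.comp_ofReal
  have hfun : (fun r : ℝ => ((1 + r ^ 2 : ℝ) : ℂ) ^ c)
      = (fun y : ℝ => ((1:ℂ) + (y:ℂ) ^ 2) ^ c) := by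
    funext r; norm_cast
  rw [hfun]
  convert h using 1
  rw [show ((1:ℂ) + (x:ℂ) ^ 2) = ((1 + x ^ 2 : ℝ) : ℂ) by push_cast; ring]

private lemma aux_radial (s : ℂ) (hs : 2 < s.re) :
    ∫ r in Ioi (0:ℝ), ((r:ℂ)) ^ 3 * ((1 + r ^ 2 : ℝ) : ℂ) ^ (-s / 2 - 2)
      = 2 / (s * (s + 2)) := by
  have hs0 : s ≠ 0 := fun h => by rw [h] at hs; simp at hs; linarith
  have hs2 : s + 2 ≠ 0 := fun h => by
    have : (s + 2).re = 0 := by rw [h]; simp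
    simp [Complex.add_re] at this; linarith
  set F : ℝ → ℂ := fun r => -((1 + r ^ 2 : ℝ) : ℂ) ^ (-s / 2) / s
    + ((1 + r ^ 2 : ℝ) : ℂ) ^ (-s / 2 - 1) / (s + 2) with hF
  have hderiv : ∀ x ∈ Ici (0:ℝ), HasDerivAt F
      ((x:ℂ) ^ 3 * ((1 + x ^ 2 : ℝ) : ℂ) ^ (-s / 2 - 2)) x := by
    intro x _
    have h0 : (0:ℝ) < 1 + x ^ 2 := by positivity
    have hw0 : ((1 + x ^ 2 : ℝ) : ℂ) ≠ 0 := Complex.ofReal_ne_zero.2 h0.ne'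
    have hslit : ((1 + x ^ 2 : ℝ) : ℂ) ∈ Complex.slitPlane :=
      Complex.ofReal_mem_slitPlane.2 h0
    have hw : HasDerivAt (fun r : ℝ => ((1 + r ^ 2 : ℝ) : ℂ)) ((2 * x : ℝ) : ℂ) x := by
      apply HasDerivAt.ofReal_comp
      simpa using ((hasDerivAt_pow 2 x).const_add 1)
    have hA := aux_hasDeriv (-s / 2) x
    have hB := aux_hasDeriv (-s / 2 - 1) x
    have h1 := (hA.neg.div_const s)
    have h2 := hB.div_const (s + 2)
    have h3 := h1.add h2
    convert h3 using 1
    case e'_4 => rfl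
    case e'_8 => rfl
    have e1 : ((1 + x ^ 2 : ℝ) : ℂ) ^ (-s / 2 - 1)
        = ((1 + x ^ 2 : ℝ) : ℂ) ^ (-s / 2 - 2) * ((1 + x ^ 2 : ℝ) : ℂ) := by
      rw [show (-s / 2 - 1 : ℂ) = (-s / 2 - 2) + 1 by ring, Complex.cpow_add _ _ hw0,
        Complex.cpow_one]
    have e2 : ((1 + x ^ 2 : ℝ) : ℂ) ^ (-s / 2 - 1 - 1)
        = ((1 + x ^ 2 : ℝ) : ℂ) ^ (-s / 2 - 2) := by
      rw [show (-s / 2 - 1 - 1 : ℂ) = -s / 2 - 2 by ring]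
    rw [e2, show (-s / 2 - 1 : ℂ) = (-s / 2) - 1 by ring] at *
    rw [e1]
    push_cast
    field_simp
    ring
  have htend : Tendsto F atTop (𝓝 0) := by
    have key : ∀ c : ℂ, c.re < 0 →
        Tendsto (fun r : ℝ => ((1 + r ^ 2 : ℝ) : ℂ) ^ c) atTop (𝓝 0) := by
      intro c hc
      rw [tendsto_zero_iff_norm_tendsto_zero]
      have heq : ∀ r : ℝ, ‖((1 + r ^ 2 : ℝ) : ℂ) ^ c‖ = (1 + r ^ 2) ^ c.re := fun r =>
        Complex.norm_cpow_eq_rpow_re_of_pos (by positivity) c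
      simp only [heq]
      have h1 : Tendsto (fun r : ℝ => 1 + r ^ 2) atTop atTop :=
        tendsto_atTop_add_const_left _ _ (tendsto_pow_atTop (by norm_num))
      have h2 := (tendsto_rpow_neg_atTop (neg_pos.2 hc)).comp h1
      simpa [neg_neg, Function.comp_def] using h2
    have hA := ((key (-s / 2) (by simp [Complex.div_re]; linarith)).neg.div_const s)
    have hB := ((key (-s / 2 - 1) (by rw [Complex.sub_re]; simp [Complex.div_re]; linarith)).div_const (s + 2))
    have h := hA.add hB
    simp only [neg_zero, zero_div, add_zero, zero_add] at h
    exact h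
  have hint : IntegrableOn (fun r : ℝ => ((r:ℂ)) ^ 3 * ((1 + r ^ 2 : ℝ) : ℂ) ^ (-s / 2 - 2))
      (Ioi (0:ℝ)) := by
    have hfin : ((Module.finrank ℝ ℝ : ℕ) : ℝ) < s.re + 1 := by
      simp only [Module.finrank_self]; push_cast; linarith
    refine ((integrable_rpow_neg_one_add_norm_sq (E := ℝ) hfin).restrict (s := Ioi 0)).mono'
      ?_ ?_
    · apply Continuous.aestronglyMeasurable
      apply Continuous.mul (by fun_prop)
      apply Continuous.cpow (Complex.continuous_ofReal.comp (by fun_prop)) continuous_const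
      intro r; exact Complex.ofReal_mem_slitPlane.2 (by positivity)
    · rw [ae_restrict_iff' measurableSet_Ioi]
      refine Eventually.of_forall fun r hr => ?_
      have hr0 : (0:ℝ) < r := hr
      have h0 : (0:ℝ) < 1 + r ^ 2 := by positivity
      rw [norm_mul,
        Complex.norm_cpow_eq_rpow_re_of_pos h0, aux_re]
      have hr3 : ‖((r:ℂ))‖ ^ 3 = |r| ^ 3 := by
        rw [Complex.norm_real, Real.norm_eq_abs]
      rw [norm_pow, Complex.norm_real, Real.norm_eq_abs, abs_of_pos hr0]
      have hb : r ^ 3 ≤ (1 + r ^ 2) ^ (3 / 2 : ℝ) := by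
        have h1 : ((r ^ 2 : ℝ)) ^ (3 / 2 : ℝ) = r ^ 3 := by
          rw [← Real.rpow_natCast r 2, ← Real.rpow_mul hr0.le, ← Real.rpow_natCast r 3]
          norm_num
        rw [← h1]
        exact Real.rpow_le_rpow (sq_nonneg r) (by linarith) (by norm_num)
      calc r ^ 3 * (1 + r ^ 2) ^ (-s.re / 2 - 2)
          ≤ (1 + r ^ 2) ^ (3 / 2 : ℝ) * (1 + r ^ 2) ^ (-s.re / 2 - 2) :=
            mul_le_mul_of_nonneg_right hb (rpow_nonneg h0.le _)
        _ = (1 + r ^ 2) ^ (-(s.re + 1) / 2) := by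
            rw [← Real.rpow_add h0]; ring_nf
        _ = (1 + ‖r‖ ^ 2) ^ (-(s.re + 1) / 2) := by rw [Real.norm_eq_abs, sq_abs]
        _ ≤ (1 + r ^ 2) ^ (-(s.re + 1) / 2) := by rw [Real.norm_eq_abs, sq_abs]
  have := integral_Ioi_of_hasDerivAt_of_tendsto' hderiv hint htend
  rw [this, hF]
  norm_num
  field_simp
  ring

/-- For `Re s > 2`, `ξ ↦ ξ₁² (1 + |ξ|²)^(-s/2 - 2)` is integrable on `ℝ²` and
`(1/(4π²)) ∫_{ℝ²} ξ₁² (1 + |ξ|²)^(-s/2 - 2) dξ = 1/(2π s (s+2))`. -/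
theorem integral_sq_mul_one_add_sq_cpow (s : ℂ) (hs : 2 < s.re) :
    Integrable (fun ξ : ℝ × ℝ =>
      ((ξ.1 ^ 2 : ℝ) : ℂ) * ((1 + ξ.1 ^ 2 + ξ.2 ^ 2 : ℝ) : ℂ) ^ (-s / 2 - 2)) ∧
    (1 / (4 * (Real.pi : ℂ) ^ 2)) *
        ∫ ξ : ℝ × ℝ,
          ((ξ.1 ^ 2 : ℝ) : ℂ) * ((1 + ξ.1 ^ 2 + ξ.2 ^ 2 : ℝ) : ℂ) ^ (-s / 2 - 2) =
      1 / (2 * (Real.pi : ℂ) * s * (s + 2)) := by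
  have hs0 : s ≠ 0 := fun h => by rw [h] at hs; simp at hs; linarith
  have hs2 : s + 2 ≠ 0 := fun h => by
    have : (s + 2).re = 0 := by rw [h]; simp
    simp [Complex.add_re] at this; linarith
  have hpi : (Real.pi : ℂ) ≠ 0 := Complex.ofReal_ne_zero.2 Real.pi_ne_zero
  refine ⟨aux_integrable s hs, ?_⟩
  have key : (∫ ξ : ℝ × ℝ,
        ((ξ.1 ^ 2 : ℝ) : ℂ) * ((1 + ξ.1 ^ 2 + ξ.2 ^ 2 : ℝ) : ℂ) ^ (-s / 2 - 2))
      = (2 / (s * (s + 2))) * Real.pi := by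
    rw [← integral_comp_polarCoord_symm]
    have heq : Set.EqOn
        (fun p : ℝ × ℝ => p.1 • (((((polarCoord.symm p).1) ^ 2 : ℝ) : ℂ) *
          ((1 + ((polarCoord.symm p).1) ^ 2 + ((polarCoord.symm p).2) ^ 2 : ℝ) : ℂ) ^ (-s / 2 - 2)))
        (fun p : ℝ × ℝ => ((p.1 : ℂ) ^ 3 * ((1 + p.1 ^ 2 : ℝ) : ℂ) ^ (-s / 2 - 2)) *
          ((Real.cos p.2 : ℂ)) ^ 2)
        polarCoord.target := by
      rintro ⟨r, θ⟩ _
      have h1 : (polarCoord.symm (r, θ)).1 = r * Real.cos θ := rfl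
      have h2 : (polarCoord.symm (r, θ)).2 = r * Real.sin θ := rfl
      simp only [h1, h2]
      have h3 : (1 + (r * Real.cos θ) ^ 2 + (r * Real.sin θ) ^ 2 : ℝ) = 1 + r ^ 2 := by
        linear_combination (r ^ 2) * (Real.sin_sq_add_cos_sq θ)
      rw [h3]
      rw [Complex.real_smul]
      push_cast
      ring
    rw [MeasureTheory.setIntegral_congr_fun polarCoord.open_target.measurableSet heq]
    have htarget : polarCoord.target = Set.Ioi (0:ℝ) ×ˢ Set.Ioo (-Real.pi) Real.pi := rfl
    rw [htarget, MeasureTheory.Measure.volume_eq_prod ℝ ℝ]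
    rw [show (∫ x : ℝ × ℝ in Set.Ioi (0:ℝ) ×ˢ Set.Ioo (-Real.pi) Real.pi,
          (x.1:ℂ) ^ 3 * ((1 + x.1 ^ 2 : ℝ):ℂ) ^ (-s / 2 - 2) * ((Real.cos x.2 : ℂ)) ^ 2
            ∂((volume : Measure ℝ).prod (volume : Measure ℝ)))
        = (∫ r in Set.Ioi (0:ℝ), (r:ℂ) ^ 3 * ((1 + r ^ 2 : ℝ):ℂ) ^ (-s / 2 - 2)) *
          ∫ θ in Set.Ioo (-Real.pi) Real.pi, ((Real.cos θ : ℂ)) ^ 2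
        from MeasureTheory.setIntegral_prod_mul
          (fun r : ℝ => (r:ℂ) ^ 3 * ((1 + r ^ 2 : ℝ):ℂ) ^ (-s / 2 - 2))
          (fun θ : ℝ => ((Real.cos θ : ℂ)) ^ 2) _ _]
    have hθ : (∫ θ in Ioo (-Real.pi) Real.pi, ((Real.cos θ : ℂ)) ^ 2) = (Real.pi : ℂ) := by
      have hc : ∀ θ : ℝ, ((Real.cos θ : ℂ)) ^ 2 = ((Real.cos θ ^ 2 : ℝ) : ℂ) := fun θ => by
        push_cast; ring
      simp_rw [hc]
      rw [show (∫ θ in Ioo (-Real.pi) Real.pi, ((Real.cos θ ^ 2 : ℝ) : ℂ))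
          = (((∫ θ in Ioo (-Real.pi) Real.pi, Real.cos θ ^ 2 : ℝ)) : ℂ)
          from integral_ofReal]
      have hr : (∫ θ in Ioo (-Real.pi) Real.pi, Real.cos θ ^ 2) = Real.pi := by
        rw [← integral_Ioc_eq_integral_Ioo,
          ← intervalIntegral.integral_of_le (by linarith [Real.pi_pos])]
        rw [integral_cos_sq]
        simp [Real.sin_pi]
      rw [hr]
    rw [aux_radial s hs, hθ]
  rw [key]
  field_simp
  ring
end

section
/- For every complex number s with Re s > 2, the function ξ ↦ ξ₁⁴ · (1 + |ξ|²)^{−s/2 − 3} is integrable on ℝ² and (1/(4π²)) ∫_{ℝ²} ξ₁⁴ (1 + |ξ|²)^{−s/2 − 3} dξ = 3/(2π · s · (s + 2) · (s + 4)). -/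
open MeasureTheory Set Real Filter Complex

section auxLemmas

lemma radial_hasDerivAt (b : ℂ) (hb : b + 1 ≠ 0) (r : ℝ) :
    HasDerivAt (fun r : ℝ => ((1 + r ^ 2 : ℝ) : ℂ) ^ (b + 1) / (2 * (b + 1)))
      ((r : ℂ) * ((1 + r ^ 2 : ℝ) : ℂ) ^ b) r := by
  have hpos : (0:ℝ) < 1 + r ^ 2 := by positivity
  have hmem : ((1:ℂ) + (r:ℂ) ^ 2) ∈ Complex.slitPlane := by
    rw [show ((1:ℂ) + (r:ℂ) ^ 2) = ((1 + r ^ 2 : ℝ) : ℂ) by push_cast; ring]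
    exact Complex.ofReal_mem_slitPlane.mpr hpos
  have hz : HasDerivAt (fun z : ℂ => 1 + z ^ 2) (2 * (r:ℂ)) (r:ℂ) := by
    simpa using ((hasDerivAt_pow 2 (r:ℂ)).const_add 1)
  have h2 : HasDerivAt (fun z : ℂ => (1 + z ^ 2) ^ (b + 1))
      ((b + 1) * ((1:ℂ) + (r:ℂ) ^ 2) ^ (b + 1 - 1) * (2 * (r:ℂ))) (r:ℂ) :=
    hz.cpow_const hmem
  have h3 := (h2.comp_ofReal).div_const (2 * (b + 1))
  convert h3 using 1
  · rfl
  · funext x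
    push_cast
    ring_nf
  · rw [show b + 1 - 1 = b by ring]
    push_cast
    field_simp

lemma radial_tendsto (c : ℂ) (hc : c.re < 0) :
    Tendsto (fun r : ℝ => ((1 + r ^ 2 : ℝ) : ℂ) ^ c) atTop (nhds 0) := by
  rw [tendsto_zero_iff_norm_tendsto_zero]
  have h1 : ∀ r : ℝ, ‖((1 + r ^ 2 : ℝ) : ℂ) ^ c‖ = (1 + r ^ 2) ^ c.re := by
    intro r
    rw [Complex.norm_cpow_eq_rpow_re_of_pos (by positivity)]
  simp_rw [h1]
  have h2 : Tendsto (fun r : ℝ => 1 + r ^ 2) atTop atTop :=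
    tendsto_atTop_add_const_left _ 1 (tendsto_pow_atTop two_ne_zero)
  have h3 : Tendsto (fun x : ℝ => x ^ c.re) atTop (nhds 0) := by
    simpa using tendsto_rpow_neg_atTop (y := -c.re) (by linarith)
  exact h3.comp h2

lemma radial_integrable (b : ℂ) (hb : b.re < -1) :
    IntegrableOn (fun r : ℝ => (r : ℂ) * ((1 + r ^ 2 : ℝ) : ℂ) ^ b) (Ioi 0) := by
  have hb1 : b.re + 1 ≠ 0 := by linarith
  -- real nonneg dominating function equals the norm
  set G : ℝ → ℝ := fun r => (1 + r ^ 2) ^ (b.re + 1) / (2 * (b.re + 1))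
  have hG : ∀ r : ℝ, HasDerivAt G (r * (1 + r ^ 2) ^ b.re) r := by
    intro r
    have hpos : (0:ℝ) < 1 + r ^ 2 := by positivity
    have h1 : HasDerivAt (fun r : ℝ => 1 + r ^ 2) (2 * r) r := by
      simpa using ((hasDerivAt_pow 2 r).const_add 1)
    have h2 := (h1.rpow_const (p := b.re + 1) (Or.inl hpos.ne'))
    have h3 := h2.div_const (2 * (b.re + 1))
    convert h3 using 1
    · rfl
    · rfl
    rw [show b.re + 1 - 1 = b.re by ring]
    field_simp
  have hGt : Tendsto G atTop (nhds 0) := by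
    have h2 : Tendsto (fun r : ℝ => 1 + r ^ 2) atTop atTop :=
      tendsto_atTop_add_const_left _ 1 (tendsto_pow_atTop two_ne_zero)
    have h3 : Tendsto (fun x : ℝ => x ^ (b.re + 1)) atTop (nhds 0) := by
      simpa using tendsto_rpow_neg_atTop (y := -(b.re + 1)) (by linarith)
    simpa using (h3.comp h2).div_const (2 * (b.re + 1))
  have hint : IntegrableOn (fun r : ℝ => r * (1 + r ^ 2) ^ b.re) (Ioi 0) := by
    refine integrableOn_Ioi_deriv_of_nonneg' (g := G) (fun x _ => hG x) ?_ hGt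
    intro x hx
    have : (0:ℝ) < x := hx
    positivity
  refine Integrable.mono' hint ?_ ?_
  · refine Continuous.aestronglyMeasurable ?_
    refine (Complex.continuous_ofReal).mul ?_
    refine Continuous.cpow ?_ continuous_const ?_
    · exact Complex.continuous_ofReal.comp (by continuity)
    · intro x
      exact Complex.ofReal_mem_slitPlane.mpr (by positivity)
  · filter_upwards [ae_restrict_mem measurableSet_Ioi] with r (hr : (0:ℝ) < r)
    rw [norm_mul, Complex.norm_real, Real.norm_eq_abs,
      Complex.norm_cpow_eq_rpow_re_of_pos (by positivity),
      abs_of_pos hr]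

lemma radial_integral (b : ℂ) (hb : b.re < -1) :
    ∫ r in Ioi (0:ℝ), (r : ℂ) * ((1 + r ^ 2 : ℝ) : ℂ) ^ b = -1 / (2 * (b + 1)) := by
  have hb1 : b + 1 ≠ 0 := by
    intro h
    have := congrArg Complex.re h
    simp at this
    linarith
  have := integral_Ioi_of_hasDerivAt_of_tendsto'
    (f := fun r : ℝ => ((1 + r ^ 2 : ℝ) : ℂ) ^ (b + 1) / (2 * (b + 1)))
    (f' := fun r : ℝ => (r : ℂ) * ((1 + r ^ 2 : ℝ) : ℂ) ^ b) (a := 0) (m := 0)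
    (fun x _ => radial_hasDerivAt b hb1 x) (radial_integrable b hb)
    (by simpa using (radial_tendsto (b + 1) (by simp; linarith)).div_const (2 * (b + 1)))
  rw [this]
  have h0 : ((1 + (0:ℝ) ^ 2 : ℝ) : ℂ) = 1 := by norm_num
  simp only [h0, Complex.one_cpow]
  field_simp
  ring

lemma cos_pow_four_integral : ∫ θ in Ioo (-π) π, Real.cos θ ^ 4 = 3 * π / 4 := by
  rw [← integral_Ioc_eq_integral_Ioo,
    ← intervalIntegral.integral_of_le (by linarith [pi_pos] : -π ≤ π)]
  have key : ∀ θ : ℝ, HasDerivAt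
      (fun θ : ℝ => 3 * θ / 8 + Real.sin (2 * θ) / 4 + Real.sin (4 * θ) / 32)
      (Real.cos θ ^ 4) θ := by
    intro θ
    have h1 : HasDerivAt (fun θ : ℝ => 3 * θ / 8) (3 * 1 / 8) θ :=
      ((hasDerivAt_id θ).const_mul 3).div_const 8
    have h2 : HasDerivAt (fun θ : ℝ => Real.sin (2 * θ) / 4)
        (Real.cos (2 * θ) * (2 * 1) / 4) θ :=
      ((Real.hasDerivAt_sin (2 * θ)).comp θ ((hasDerivAt_id θ).const_mul 2)).div_const 4
    have h3 : HasDerivAt (fun θ : ℝ => Real.sin (4 * θ) / 32)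
        (Real.cos (4 * θ) * (4 * 1) / 32) θ :=
      ((Real.hasDerivAt_sin (4 * θ)).comp θ ((hasDerivAt_id θ).const_mul 4)).div_const 32
    have h := (h1.add h2).add h3
    convert h using 1
    · rfl
    · rfl
    · rfl
    rw [show (4:ℝ) * θ = 2 * (2 * θ) by ring, Real.cos_two_mul (2 * θ), Real.cos_two_mul θ]
    ring
  rw [intervalIntegral.integral_eq_sub_of_hasDerivAt (fun x _ => key x)
    ((Real.continuous_cos.pow 4).intervalIntegrable _ _)]
  have s2 : Real.sin (2 * π) = 0 := Real.sin_two_pi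
  have s4 : Real.sin (4 * π) = 0 := by
    have := Real.sin_nat_mul_pi 4
    norm_num at this
    exact this
  simp only [mul_neg, Real.sin_neg, s2, s4]
  ring

end auxLemmas

/-- For `Re s > 2`, `ξ ↦ ξ₁⁴ (1 + |ξ|²)^(-s/2 - 3)` is integrable on `ℝ²` and
`(1/(4π²)) ∫_{ℝ²} ξ₁⁴ (1 + |ξ|²)^(-s/2 - 3) dξ = 3/(2π s (s+2)(s+4))`. -/
theorem integral_pow_four_mul_one_add_sq_cpow (s : ℂ) (hs : 2 < s.re) :
    Integrable (fun ξ : ℝ × ℝ =>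
      ((ξ.1 ^ 4 : ℝ) : ℂ) * ((1 + ξ.1 ^ 2 + ξ.2 ^ 2 : ℝ) : ℂ) ^ (-s / 2 - 3)) ∧
    (1 / (4 * (Real.pi : ℂ) ^ 2)) *
        ∫ ξ : ℝ × ℝ,
          ((ξ.1 ^ 4 : ℝ) : ℂ) * ((1 + ξ.1 ^ 2 + ξ.2 ^ 2 : ℝ) : ℂ) ^ (-s / 2 - 3) =
      3 / (2 * (Real.pi : ℂ) * s * (s + 2) * (s + 4)) := by
  have hπ : (Real.pi : ℂ) ≠ 0 := by exact_mod_cast Real.pi_ne_zero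
  have hs0 : s ≠ 0 := by
    intro h; rw [h] at hs; norm_num at hs
  have hs2 : s + 2 ≠ 0 := by
    intro h
    have := congrArg Complex.re h
    simp at this
    linarith
  have hs4 : s + 4 ≠ 0 := by
    intro h
    have := congrArg Complex.re h
    simp at this
    linarith
  have hwre : (-s / 2 - 3).re = -s.re / 2 - 3 := by
    simp [Complex.sub_re, Complex.div_ofReal_re]
  -- continuity
  have hcont : Continuous (fun ξ : ℝ × ℝ =>
      ((ξ.1 ^ 4 : ℝ) : ℂ) * ((1 + ξ.1 ^ 2 + ξ.2 ^ 2 : ℝ) : ℂ) ^ (-s / 2 - 3)) := by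
    apply Continuous.mul
    · exact Complex.continuous_ofReal.comp (by continuity)
    · apply Continuous.cpow (Complex.continuous_ofReal.comp (by continuity)) continuous_const
      intro ξ
      exact Complex.ofReal_mem_slitPlane.mpr (by positivity)
  -- integrability
  have hInt : Integrable (fun ξ : ℝ × ℝ =>
      ((ξ.1 ^ 4 : ℝ) : ℂ) * ((1 + ξ.1 ^ 2 + ξ.2 ^ 2 : ℝ) : ℂ) ^ (-s / 2 - 3)) := by
    have hfin : (Module.finrank ℝ (ℝ × ℝ) : ℝ) < s.re + 2 := by
      rw [show Module.finrank ℝ (ℝ × ℝ) = 2 by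
        rw [Module.finrank_prod, Module.finrank_self]]
      push_cast
      linarith
    refine (integrable_rpow_neg_one_add_norm_sq (E := ℝ × ℝ) (μ := volume) hfin).mono'
      hcont.aestronglyMeasurable (Filter.Eventually.of_forall fun ξ => ?_)
    have hApos : (0:ℝ) < 1 + ξ.1 ^ 2 + ξ.2 ^ 2 := by positivity
    rw [norm_mul, Complex.norm_real, Real.norm_eq_abs,
      Complex.norm_cpow_eq_rpow_re_of_pos hApos, hwre]
    set A : ℝ := 1 + ξ.1 ^ 2 + ξ.2 ^ 2 with hA
    have hnorm : 1 + ‖ξ‖ ^ 2 ≤ A := by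
      have h1 : ‖ξ‖ ^ 2 ≤ ξ.1 ^ 2 + ξ.2 ^ 2 := by
        rw [Prod.norm_def]
        rcases max_cases ‖ξ.1‖ ‖ξ.2‖ with ⟨h, _⟩ | ⟨h, _⟩ <;>
          rw [h, Real.norm_eq_abs, _root_.sq_abs] <;>
          nlinarith [sq_nonneg ξ.1, sq_nonneg ξ.2]
      simp only [hA]
      linarith
    have hBpos : (0:ℝ) < 1 + ‖ξ‖ ^ 2 := by positivity
    have step1 : A ^ (-s.re / 2 - 3) = A ^ (-(2:ℝ)) * A ^ (-(s.re + 2) / 2) := by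
      rw [← Real.rpow_add hApos]; ring_nf
    have step2 : |ξ.1 ^ 4| * A ^ (-(2:ℝ)) ≤ 1 := by
      have h4 : |ξ.1 ^ 4| = ξ.1 ^ 4 := abs_of_nonneg (by positivity)
      have hA2 : A ^ (-(2:ℝ)) = (A ^ (2:ℕ))⁻¹ := by
        rw [Real.rpow_neg hApos.le, ← Real.rpow_natCast A 2]
        norm_num
      rw [h4, hA2, mul_inv_le_iff₀ (by positivity), one_mul]
      simp only [hA]
      nlinarith [sq_nonneg ξ.2, sq_nonneg (ξ.1 ^ 2 + ξ.2 ^ 2), sq_nonneg ξ.1]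
    calc |ξ.1 ^ 4| * A ^ (-s.re / 2 - 3)
        = (|ξ.1 ^ 4| * A ^ (-(2:ℝ))) * A ^ (-(s.re + 2) / 2) := by rw [step1]; ring
      _ ≤ 1 * A ^ (-(s.re + 2) / 2) := by
          apply mul_le_mul_of_nonneg_right step2 (Real.rpow_nonneg hApos.le _)
      _ = A ^ (-(s.re + 2) / 2) := one_mul _
      _ ≤ (1 + ‖ξ‖ ^ 2) ^ (-(s.re + 2) / 2) := by
          apply Real.rpow_le_rpow_of_nonpos hBpos hnorm
          have : (0:ℝ) < s.re + 2 := by linarith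
          linarith [div_nonneg (by linarith : (0:ℝ) ≤ s.re + 2) (by norm_num : (0:ℝ) ≤ 2)]
  refine ⟨hInt, ?_⟩
  -- polar coordinates
  have hpolar := (integral_comp_polarCoord_symm (fun ξ : ℝ × ℝ =>
    ((ξ.1 ^ 4 : ℝ) : ℂ) * ((1 + ξ.1 ^ 2 + ξ.2 ^ 2 : ℝ) : ℂ) ^ (-s / 2 - 3))).symm
  rw [hpolar]
  have htarget : polarCoord.target = Ioi (0:ℝ) ×ˢ Ioo (-π) π := rfl
  set F : ℝ → ℂ := fun r => ((r ^ 5 : ℝ) : ℂ) * ((1 + r ^ 2 : ℝ) : ℂ) ^ (-s / 2 - 3) with hF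
  set G : ℝ → ℂ := fun θ => ((Real.cos θ ^ 4 : ℝ) : ℂ) with hG
  have heq : ∀ p : ℝ × ℝ, p.1 • (fun ξ : ℝ × ℝ =>
      ((ξ.1 ^ 4 : ℝ) : ℂ) * ((1 + ξ.1 ^ 2 + ξ.2 ^ 2 : ℝ) : ℂ) ^ (-s / 2 - 3))
      (polarCoord.symm p) = F p.1 * G p.2 := by
    intro p
    have hsymm : polarCoord.symm p = (p.1 * Real.cos p.2, p.1 * Real.sin p.2) := rfl
    rw [hsymm]
    simp only [hF, hG]
    have hbase : ((1 + (p.1 * Real.cos p.2) ^ 2 + (p.1 * Real.sin p.2) ^ 2 : ℝ) : ℂ)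
        = ((1 + p.1 ^ 2 : ℝ) : ℂ) := by
      congr 1
      nlinarith [Real.sin_sq_add_cos_sq p.2]
    rw [hbase]
    rw [real_smul]
    push_cast
    ring
  rw [htarget]
  rw [setIntegral_congr_fun (measurableSet_Ioi.prod measurableSet_Ioo) (fun p _ => heq p)]
  rw [show (volume : Measure (ℝ × ℝ)) = (volume : Measure ℝ).prod volume from
    (Measure.volume_eq_prod ℝ ℝ)]
  rw [setIntegral_prod_mul F G]
  -- angular integral
  have hGint : ∫ θ in Ioo (-π) π, G θ = ((3 * π / 4 : ℝ) : ℂ) := by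
    have h := integral_ofReal (𝕜 := ℂ) (μ := volume.restrict (Ioo (-π) π))
      (f := fun θ => Real.cos θ ^ 4)
    rw [hG]
    exact h.trans (by rw [cos_pow_four_integral]; rfl)
  -- radial integral
  have hne : ∀ r : ℝ, ((1 + r ^ 2 : ℝ) : ℂ) ≠ 0 := by
    intro r
    exact_mod_cast (by positivity : (0:ℝ) < 1 + r ^ 2).ne'
  have hdecomp : ∀ r : ℝ, F r =
      (r : ℂ) * ((1 + r ^ 2 : ℝ) : ℂ) ^ (-s / 2 - 3 + 2)
      - 2 * ((r : ℂ) * ((1 + r ^ 2 : ℝ) : ℂ) ^ (-s / 2 - 3 + 1))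
      + (r : ℂ) * ((1 + r ^ 2 : ℝ) : ℂ) ^ (-s / 2 - 3) := by
    intro r
    rw [hF]
    rw [Complex.cpow_add _ _ (hne r), Complex.cpow_add _ _ (hne r), Complex.cpow_one,
      Complex.cpow_two]
    push_cast
    ring
  have hre1 : (-s / 2 - 3 + 2).re < -1 := by
    simp only [Complex.add_re, hwre, Complex.re_ofNat]
    linarith
  have hre2 : (-s / 2 - 3 + 1).re < -1 := by
    simp only [Complex.add_re, hwre, Complex.one_re]
    linarith
  have hre3 : (-s / 2 - 3).re < -1 := by rw [hwre]; linarith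
  have hFint : ∫ r in Ioi (0:ℝ), F r =
      (-1 / (2 * (-s / 2 - 3 + 2 + 1))) - 2 * (-1 / (2 * (-s / 2 - 3 + 1 + 1)))
      + (-1 / (2 * (-s / 2 - 3 + 1))) := by
    have i1 := radial_integrable _ hre1
    have i2 := radial_integrable _ hre2
    have i3 := radial_integrable _ hre3
    have i2' : Integrable (fun r : ℝ => 2 * ((r : ℂ) * ((1 + r ^ 2 : ℝ) : ℂ) ^ (-s / 2 - 3 + 1)))
        (volume.restrict (Ioi 0)) := i2.const_mul 2
    have i12 : Integrable (fun r : ℝ =>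
        (r : ℂ) * ((1 + r ^ 2 : ℝ) : ℂ) ^ (-s / 2 - 3 + 2)
        - 2 * ((r : ℂ) * ((1 + r ^ 2 : ℝ) : ℂ) ^ (-s / 2 - 3 + 1)))
        (volume.restrict (Ioi 0)) := i1.sub i2'
    rw [setIntegral_congr_fun measurableSet_Ioi (fun r _ => hdecomp r)]
    rw [integral_add i12 i3, integral_sub i1 i2', integral_const_mul]
    rw [radial_integral _ hre1, radial_integral _ hre2, radial_integral _ hre3]
  have hne1 : (-s / 2 - 3 + 2 + 1 : ℂ) ≠ 0 := by
    intro h; apply hs0; linear_combination -2 * h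
  have hne2 : (-s / 2 - 3 + 1 + 1 : ℂ) ≠ 0 := by
    intro h; apply hs2; linear_combination -2 * h
  have hne3 : (-s / 2 - 3 + 1 : ℂ) ≠ 0 := by
    intro h; apply hs4; linear_combination -2 * h
  have v1 : (-1 : ℂ) / (2 * (-s / 2 - 3 + 2 + 1)) = 1 / s := by
    rw [div_eq_div_iff (by simpa using hne1) hs0]
    ring
  have v2 : (-1 : ℂ) / (2 * (-s / 2 - 3 + 1 + 1)) = 1 / (s + 2) := by
    rw [div_eq_div_iff (by simpa using hne2) hs2]
    ring
  have v3 : (-1 : ℂ) / (2 * (-s / 2 - 3 + 1)) = 1 / (s + 4) := by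
    rw [div_eq_div_iff (by simpa using hne3) hs4]
    ring
  rw [hFint, hGint, v1, v2, v3]
  push_cast
  have hD : s * (s + 2) * (s + 4) ≠ 0 := by apply_rules [mul_ne_zero]
  have h1 : (4:ℂ) * (Real.pi:ℂ) ^ 2 * (s * (s + 2) * (s + 4) * 4) ≠ 0 :=
    mul_ne_zero (mul_ne_zero (by norm_num) (pow_ne_zero 2 hπ))
      (mul_ne_zero hD (by norm_num))
  have h2 : (2:ℂ) * (Real.pi:ℂ) * s * (s + 2) * (s + 4) ≠ 0 :=
    mul_ne_zero (mul_ne_zero (mul_ne_zero (mul_ne_zero (by norm_num) hπ) hs0) hs2) hs4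
  rw [show (1 / s - 2 * (1 / (s + 2)) + 1 / (s + 4)) = 8 / (s * (s + 2) * (s + 4)) by
    field_simp
    ring]
  rw [show ((3:ℂ) * (Real.pi:ℂ) / 4) = (3 * (Real.pi:ℂ)) / 4 by ring]
  rw [div_mul_div_comm, div_mul_div_comm]
  rw [div_eq_div_iff h1 h2]
  ring
end
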